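/- Let T be a d-dimensional simplex in ℝ^d and let 𝒯 = {x_i + τ_i T : i = 1, …, n} (with all τ_i > 0) be a family of positive homothetic copies of T such that every hyperplane that is parallel to a facet of T and intersects conv(⋃𝒯) intersects some member of 𝒯. Then ⋃𝒯 can be covered by a translate of ((d+1)/2)(∑_{i=1}^n τ_i) T. -/

import Mathlib

open Set Metric Pointwise
open scoped RealInnerProductSpace

open MeasureTheory

set_option maxHeartbeats 1000000

lemma abg_len {n : ℕ} (τ β : Fin n → ℝ) (hτ : ∀ i, 0 < τ i) (m : ℝ)
    (hcov : ∀ (i : Fin n), ∀ r ∈ Set.Ico m (β i), ∃ k, β k ≤ r ∧ r ≤ β k + τ k)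
    (i : Fin n) :
    β i - m ≤ ∑ k ∈ Finset.univ.filter (fun k => β k < β i), τ k := by
  have hsub : Set.Ico m (β i) ⊆
      ⋃ k ∈ Finset.univ.filter (fun k => β k < β i), Set.Icc (β k) (β k + τ k) := by
    intro r hr
    obtain ⟨k, hk1, hk2⟩ := hcov i r hr
    exact Set.mem_biUnion
      (Finset.mem_coe.mpr (Finset.mem_filter.mpr ⟨Finset.mem_univ _, lt_of_le_of_lt hk1 hr.2⟩))
      ⟨hk1, hk2⟩
  have hv := (measure_mono hsub).trans
    (measure_biUnion_finset_le (μ := volume) _ _)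
  rw [Real.volume_Ico] at hv
  have hv2 : ENNReal.ofReal (β i - m) ≤
      ENNReal.ofReal (∑ k ∈ Finset.univ.filter (fun k => β k < β i), τ k) := by
    refine hv.trans ?_
    simp only [Real.volume_Icc, add_sub_cancel_left]
    rw [← ENNReal.ofReal_sum_of_nonneg (fun k _ => (hτ k).le)]
  exact ENNReal.ofReal_le_ofReal_iff (Finset.sum_nonneg fun k _ => (hτ k).le) |>.mp hv2

lemma abg_core {n : ℕ} (τ β : Fin n → ℝ) (hτ : ∀ i, 0 < τ i) (m : ℝ)
    (hcov : ∀ (i : Fin n), ∀ r ∈ Set.Ico m (β i), ∃ k, β k ≤ r ∧ r ≤ β k + τ k) :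
    ∑ i, τ i * β i ≤ (∑ i, τ i) * m + ((∑ i, τ i)^2 - ∑ i, (τ i)^2) / 2 := by
  have hA : ∑ i, τ i * (β i - m) ≤
      ∑ i, ∑ k, (if β k < β i then τ i * τ k else 0) := by
    refine Finset.sum_le_sum fun i _ => ?_
    calc τ i * (β i - m) ≤ τ i * ∑ k ∈ Finset.univ.filter (fun k => β k < β i), τ k :=
          mul_le_mul_of_nonneg_left (abg_len τ β hτ m hcov i) (hτ i).le
      _ = ∑ k, (if β k < β i then τ i * τ k else 0) := by
          rw [Finset.mul_sum, Finset.sum_filter]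
  set A := ∑ i, ∑ k, (if β k < β i then τ i * τ k else 0) with hAdef
  have hswap : A = ∑ i, ∑ k, (if β i < β k then τ i * τ k else 0) := by
    rw [hAdef, Finset.sum_comm]
    refine Finset.sum_congr rfl fun i _ => Finset.sum_congr rfl fun k _ => ?_
    rw [mul_comm]
  have h2A : A + A ≤ (∑ i, τ i)^2 - ∑ i, (τ i)^2 := by
    have hsq : (∑ i, τ i)^2 - ∑ i, (τ i)^2
        = ∑ i, ∑ k, (if i = k then 0 else τ i * τ k) := by
      have h1 : (∑ i, τ i)^2 = ∑ i, ∑ k, τ i * τ k := by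
        rw [sq, Finset.sum_mul_sum]
      have h2 : ∀ i : Fin n, ∑ k, (if i = k then 0 else τ i * τ k)
          = (∑ k, τ i * τ k) - τ i ^ 2 := by
        intro i
        have : ∀ k : Fin n, (if i = k then 0 else τ i * τ k)
            = τ i * τ k - (if i = k then τ i * τ k else 0) := by
          intro k; by_cases h : i = k <;> simp [h]
        rw [Finset.sum_congr rfl (fun k _ => this k), Finset.sum_sub_distrib,
          Finset.sum_ite_eq Finset.univ i (fun k => τ i * τ k)]
        simp [sq]
      rw [h1, ← Finset.sum_sub_distrib]
      exact Finset.sum_congr rfl fun i _ => (h2 i).symm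
    rw [hsq]
    nth_rewrite 2 [hswap]
    rw [hAdef, ← Finset.sum_add_distrib]
    refine Finset.sum_le_sum fun i _ => ?_
    rw [← Finset.sum_add_distrib]
    refine Finset.sum_le_sum fun k _ => ?_
    rcases lt_trichotomy (β k) (β i) with h | h | h
    · rcases eq_or_ne i k with rfl | hik
      · simp at h
      · simp [h, not_lt.mpr h.le, hik, le_refl]
    · have : ¬ (β k < β i) := by simp [h]
      have h2 : ¬ (β i < β k) := by simp [h]
      rcases eq_or_ne i k with rfl | hik
      · simp [this, h2]
      · simp [this, h2, hik]
        exact mul_nonneg (hτ i).le (hτ k).le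
    · rcases eq_or_ne i k with rfl | hik
      · simp at h
      · simp [h, not_lt.mpr h.le, hik, le_refl]
  have hexp : ∑ i, τ i * (β i - m) = ∑ i, τ i * β i - (∑ i, τ i) * m := by
    rw [Finset.sum_mul]
    rw [← Finset.sum_sub_distrib]
    exact Finset.sum_congr rfl fun i _ => by ring
  linarith [hA, h2A, hexp.symm.le]

/-- **Akopyan–Balitskiy–Grigorev.** Let `T` be a `d`-dimensional simplex in `ℝ^d`
(the convex hull of the affinely independent points `v 0, …, v d`) and let
`𝒯 = {xᵢ + τᵢ T}` be a family of positive homothets of `T` such that every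
hyperplane parallel to a facet of `T` (i.e. every translate of the affine hull of
the `d` vertices `{v i : i ≠ j}` for some `j`) which intersects `conv(⋃ 𝒯)`
intersects some member of `𝒯`. Then `⋃ 𝒯` can be covered by a translate of
`((d+1)/2) (∑ τᵢ) T`. -/
theorem stmt_5 (d n : ℕ) (hn : 0 < n)
    (v : Fin (d + 1) → EuclideanSpace ℝ (Fin d)) (hv : AffineIndependent ℝ v)
    (T : Set (EuclideanSpace ℝ (Fin d))) (hT : T = convexHull ℝ (Set.range v))
    (x : Fin n → EuclideanSpace ℝ (Fin d)) (τ : Fin n → ℝ) (hτ : ∀ i, 0 < τ i)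
    (hcut : ∀ (j : Fin (d + 1)) (c : EuclideanSpace ℝ (Fin d)),
      ((((fun y => c + y) '' (affineSpan ℝ (v '' {i | i ≠ j}) : Set (EuclideanSpace ℝ (Fin d)))) ∩
          convexHull ℝ (⋃ i, x i +ᵥ τ i • T)).Nonempty →
        ∃ i, (((fun y => c + y) ''
            (affineSpan ℝ (v '' {i | i ≠ j}) : Set (EuclideanSpace ℝ (Fin d)))) ∩
          (x i +ᵥ τ i • T)).Nonempty)) :
    ∃ t : EuclideanSpace ℝ (Fin d),
      (⋃ i, x i +ᵥ τ i • T) ⊆ t +ᵥ ((((d : ℝ) + 1) / 2) * ∑ i, τ i) • T := by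
  have hnne : Nonempty (Fin n) := ⟨⟨0, hn⟩⟩
  -- trivial case d = 0
  rcases Nat.eq_zero_or_pos d with hd0 | hdpos
  · subst hd0
    have hsub : ∀ a c : EuclideanSpace ℝ (Fin 0), a = c := fun a c =>
      by ext i; exact i.elim0
    have hv0 : v 0 ∈ T := by
      rw [hT]; exact subset_convexHull ℝ _ ⟨0, rfl⟩
    refine ⟨0, fun z _ => ?_⟩
    exact Set.mem_vadd_set.mpr ⟨_, Set.smul_mem_smul_set hv0, hsub _ _⟩
  subst hT
  have htop : affineSpan ℝ (Set.range v) = ⊤ :=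
    hv.affineSpan_eq_top_iff_card_eq_finrank_add_one.mpr
      (by simp [finrank_euclideanSpace])
  let b : AffineBasis (Fin (d + 1)) ℝ (EuclideanSpace ℝ (Fin d)) := ⟨v, hv, htop⟩
  have hbv : ⇑b = v := rfl
  set T : Set (EuclideanSpace ℝ (Fin d)) := convexHull ℝ (Set.range v) with hTdef
  -- membership criterion
  have hTmem : ∀ z : EuclideanSpace ℝ (Fin d), z ∈ T ↔ ∀ j, 0 ≤ b.coord j z := by
    intro z
    rw [hTdef, ← hbv, b.convexHull_eq_nonneg_coord]
    exact Iff.rfl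
  -- affine computation lemma
  have haff : ∀ (j : Fin (d+1)) (p q : EuclideanSpace ℝ (Fin d)) (c : ℝ),
      b.coord j (p + c • q) = b.coord j p + c * (b.coord j q - b.coord j 0) := by
    intro j p q c
    have hlin : ∀ y : EuclideanSpace ℝ (Fin d),
        (b.coord j).linear y = b.coord j y - b.coord j 0 := by
      intro y
      have h0 := (b.coord j).map_vadd 0 y
      simp only [vadd_eq_add, add_zero] at h0
      rw [h0]; ring
    have h1 := (b.coord j).map_vadd p (c • q)
    simp only [vadd_eq_add] at h1
    rw [add_comm (c • q) p] at h1
    rw [h1, (b.coord j).linear.map_smul, smul_eq_mul, hlin]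
    ring
  -- coordinates of T are in [0,1]
  have hT01 : ∀ u ∈ T, ∀ j, 0 ≤ b.coord j u ∧ b.coord j u ≤ 1 := by
    intro u hu j
    refine ⟨(hTmem u).mp hu j, ?_⟩
    have hsum := b.sum_coord_apply_eq_one u
    calc b.coord j u ≤ ∑ k, b.coord k u :=
          Finset.single_le_sum (fun k _ => (hTmem u).mp hu k) (Finset.mem_univ j)
      _ = 1 := hsum
  haveI := hnne
  -- the barycentric "intervals" of the homothets
  set B : Fin n → Fin (d+1) → ℝ := fun i j => b.coord j (x i) - τ i * b.coord j 0 with hBdef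
  have hrange : ∀ (i : Fin n) (j : Fin (d+1)) (z : EuclideanSpace ℝ (Fin d)),
      z ∈ x i +ᵥ τ i • T → B i j ≤ b.coord j z ∧ b.coord j z ≤ B i j + τ i := by
    intro i j z hz
    obtain ⟨y, hy, rfl⟩ := Set.mem_vadd_set.mp hz
    obtain ⟨u, hu, rfl⟩ := Set.mem_smul_set.mp hy
    rw [vadd_eq_add, haff j (x i) u (τ i)]
    obtain ⟨h0, h1⟩ := hT01 u hu j
    constructor
    · simp only [hBdef]
      nlinarith [(hτ i).le]
    · simp only [hBdef]
      nlinarith [(hτ i).le]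
  set m : Fin (d+1) → ℝ := fun j => Finset.univ.inf' Finset.univ_nonempty
    (fun i => B i j) with hmdef
  have hmle : ∀ (j : Fin (d+1)) (i : Fin n), m j ≤ B i j := fun j i =>
    Finset.inf'_le _ (Finset.mem_univ i)
  have hvT : ∀ k, v k ∈ T := fun k => subset_convexHull ℝ _ ⟨k, rfl⟩
  have hcoordv : ∀ j k, b.coord j (v k) = if j = k then 1 else 0 := by
    intro j k; rw [← hbv]; exact b.coord_apply j k
  have hmemU : ∀ (i : Fin n) (u : EuclideanSpace ℝ (Fin d)), u ∈ T →
      x i + τ i • u ∈ ⋃ l, x l +ᵥ τ l • T := by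
    intro i u hu
    exact Set.mem_iUnion.mpr ⟨i, Set.mem_vadd_set.mpr
      ⟨τ i • u, Set.smul_mem_smul_set hu, rfl⟩⟩
  haveI hNT : Nontrivial (Fin (d+1)) := by
    refine ⟨⟨0, by omega⟩, ⟨1, by omega⟩, ?_⟩
    simp [Fin.ext_iff]
  have hspan0 : ∀ (j : Fin (d+1)) (w : EuclideanSpace ℝ (Fin d)),
      w ∈ affineSpan ℝ (v '' {i | i ≠ j}) → b.coord j w = 0 := by
    intro j
    have hle : affineSpan ℝ (v '' {i | i ≠ j}) ≤
        AffineSubspace.comap (b.coord j) (AffineSubspace.mk' (0:ℝ) ⊥) := by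
      rw [affineSpan_le]
      rintro w ⟨k, hk, rfl⟩
      show b.coord j (v k) ∈ AffineSubspace.mk' (0:ℝ) (⊥ : Submodule ℝ ℝ)
      rw [AffineSubspace.mem_mk']
      have hkj : ¬ (j = k) := fun h => hk h.symm
      simp [hcoordv j k, hkj]
    intro w hw
    have h2 : b.coord j w ∈ AffineSubspace.mk' (0:ℝ) (⊥ : Submodule ℝ ℝ) :=
      AffineSubspace.mem_comap.mp (hle hw)
    rw [AffineSubspace.mem_mk'] at h2
    simpa using h2
  -- interval covering in each barycentric direction
  have hcovcol : ∀ (j : Fin (d+1)) (i : Fin n),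
      ∀ r ∈ Set.Ico (m j) (B i j), ∃ k, B k j ≤ r ∧ r ≤ B k j + τ k := by
    intro j i r hr
    obtain ⟨k₀, hk₀⟩ := exists_ne j
    have hvk₀span : v k₀ ∈ affineSpan ℝ (v '' {i | i ≠ j}) :=
      subset_affineSpan ℝ _ ⟨k₀, hk₀, rfl⟩
    have hcvk₀ : b.coord j (v k₀) = 0 := by
      have : ¬ (j = k₀) := fun h => hk₀ h.symm
      simp [hcoordv j k₀, this]
    obtain ⟨i₀, -, hi₀⟩ := Finset.exists_mem_eq_inf'
      (Finset.univ_nonempty (α := Fin n)) (fun i => B i j)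
    set z₀ := x i₀ + τ i₀ • v k₀ with hz₀def
    set z₁ := x i + τ i • v k₀ with hz₁def
    have hcz₀ : b.coord j z₀ = m j := by
      rw [hz₀def, haff, hcvk₀, hmdef]
      simp only [hBdef] at hi₀ ⊢
      rw [hi₀]; ring
    have hcz₁ : b.coord j z₁ = B i j := by
      rw [hz₁def, haff, hcvk₀]
      simp only [hBdef]; ring
    have hmlt : m j < B i j := lt_of_le_of_lt hr.1 hr.2
    set s : ℝ := (r - m j) / (B i j - m j) with hsdef
    have hs0 : 0 ≤ s := div_nonneg (by linarith [hr.1]) (by linarith)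
    have hs1 : s ≤ 1 := by
      rw [hsdef, div_le_one (by linarith)]
      linarith [hr.2]
    obtain ⟨z, hzdef⟩ : ∃ z', z' = (1 - s) • z₀ + s • z₁ := ⟨_, rfl⟩
    have hzconv : z ∈ convexHull ℝ (⋃ l, x l +ᵥ τ l • T) := by
      have h₀ : z₀ ∈ convexHull ℝ (⋃ l, x l +ᵥ τ l • T) :=
        subset_convexHull ℝ _ (hmemU i₀ (v k₀) (hvT k₀))
      have h₁ : z₁ ∈ convexHull ℝ (⋃ l, x l +ᵥ τ l • T) :=
        subset_convexHull ℝ _ (hmemU i (v k₀) (hvT k₀))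
      rw [hzdef]
      exact (convex_convexHull ℝ _) h₀ h₁ (by linarith) hs0 (by ring)
    have hne : B i j - m j ≠ 0 := ne_of_gt (by linarith)
    have hmul : s * (B i j - m j) = r - m j := by
      rw [hsdef]; exact div_mul_cancel₀ _ hne
    have hcz : b.coord j z = r := by
      rw [hzdef, Convex.combo_affine_apply (by ring), hcz₀, hcz₁,
        smul_eq_mul, smul_eq_mul]
      nlinarith [hmul]
    obtain ⟨k, y, ⟨w, hwspan, rfl⟩, hymem⟩ := hcut j (z - v k₀)
      ⟨z, ⟨v k₀, hvk₀span, by show z - v k₀ + v k₀ = z; abel⟩, hzconv⟩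
    -- the coordinate of a point of the shifted hyperplane
    have hcoordshift : ∀ p : EuclideanSpace ℝ (Fin d), b.coord j p = 0 →
        b.coord j ((z - v k₀) + p) = b.coord j z := by
      intro p hp
      have h1 : (z - v k₀) + p = p + (1:ℝ) • (z - v k₀) := by
        rw [one_smul]; abel
      have h2 : z = v k₀ + (1:ℝ) • (z - v k₀) := by rw [one_smul]; abel
      rw [h1, haff]
      nth_rewrite 2 [h2]
      rw [haff, hcvk₀, hp]
    have hcy : b.coord j ((z - v k₀) + w) = r := by
      rw [hcoordshift w (hspan0 j w hwspan), hcz]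
    obtain ⟨hlo, hhi⟩ := hrange k _ _ hymem
    rw [hcy] at hlo hhi
    exact ⟨k, hlo, hhi⟩
  -- the core inequality in each direction
  have hcol : ∀ j : Fin (d+1), ∑ i, τ i * B i j ≤
      (∑ i, τ i) * m j + ((∑ i, τ i)^2 - ∑ i, (τ i)^2) / 2 := fun j =>
    abg_core τ (fun i => B i j) hτ (m j) (hcovcol j)
  have hrow : ∀ i, ∑ j, B i j = 1 - τ i := by
    intro i
    simp only [hBdef]
    rw [Finset.sum_sub_distrib, b.sum_coord_apply_eq_one, ← Finset.mul_sum,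
      b.sum_coord_apply_eq_one, mul_one]
  have hlampos : 0 < ∑ i, τ i :=
    Finset.sum_pos (fun i _ => hτ i) Finset.univ_nonempty
  have hsum1 : ∑ j : Fin (d+1), ∑ i, τ i * B i j
      = (∑ i, τ i) - ∑ i, (τ i)^2 := by
    rw [Finset.sum_comm, ← Finset.sum_sub_distrib]
    refine Finset.sum_congr rfl fun i _ => ?_
    rw [← Finset.mul_sum, hrow i]
    ring
  have hd1 : (1:ℝ) ≤ (d:ℝ) := by exact_mod_cast hdpos
  have hsqnn : 0 ≤ ∑ i, (τ i)^2 := Finset.sum_nonneg fun i _ => sq_nonneg _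
  have hKey : 1 - ((d:ℝ)+1)/2 * (∑ i, τ i) ≤ ∑ j, m j := by
    have h2 := Finset.sum_le_sum (fun j (_ : j ∈ Finset.univ) => hcol j)
    rw [hsum1, Finset.sum_add_distrib, ← Finset.mul_sum, Finset.sum_const,
      Finset.card_univ, Fintype.card_fin, nsmul_eq_mul] at h2
    push_cast at h2
    have hmono : (∑ i, τ i) * (1 - ((d:ℝ)+1)/2 * (∑ i, τ i)) ≤
        (∑ i, τ i) * (∑ j, m j) := by
      nlinarith [h2, hsqnn, hd1, hlampos]
    exact le_of_mul_le_mul_left hmono hlampos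
  set lam := ∑ i, τ i with hlam
  set μ : ℝ := ((d:ℝ)+1)/2 * lam with hμdef
  have hμpos : 0 < μ := by
    rw [hμdef]
    have : (0:ℝ) < ((d:ℝ)+1)/2 := by positivity
    exact mul_pos this hlampos
  have hd1ne : ((d:ℝ)+1) ≠ 0 := by positivity
  set ε : ℝ := (∑ j, m j + μ - 1)/((d:ℝ)+1) with hεdef
  have hεnn : 0 ≤ ε := by
    rw [hεdef]
    apply div_nonneg _ (by positivity)
    rw [hμdef]
    linarith [hKey]
  set w : Fin (d+1) → ℝ := fun j => m j + μ * b.coord j 0 - ε with hwdef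
  have hw1 : ∑ j, w j = 1 := by
    simp only [hwdef]
    rw [Finset.sum_sub_distrib, Finset.sum_add_distrib, ← Finset.mul_sum,
      b.sum_coord_apply_eq_one, Finset.sum_const, Finset.card_univ,
      Fintype.card_fin, nsmul_eq_mul, hεdef]
    push_cast
    field_simp
    ring
  set t : EuclideanSpace ℝ (Fin d) := Finset.univ.affineCombination ℝ (⇑b) w with htdef
  have hcoordt : ∀ j, b.coord j t = w j := fun j =>
    b.coord_apply_combination_of_mem (Finset.mem_univ j) hw1
  refine ⟨t, fun z hz => ?_⟩
  obtain ⟨i, hzi⟩ := Set.mem_iUnion.mp hz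
  have hzc : ∀ j, m j ≤ b.coord j z := fun j =>
    (hmle j i).trans (hrange i j z hzi).1
  have hcoordu : ∀ j, b.coord j (μ⁻¹ • (z - t)) =
      μ⁻¹ * (b.coord j z - m j + ε) := by
    intro j
    have h1 : μ⁻¹ • (z - t) = (0:EuclideanSpace ℝ (Fin d)) + μ⁻¹ • (z - t) := by
      rw [zero_add]
    have h2 : z - t = z + (-1:ℝ) • t := by
      rw [neg_one_smul]; abel
    rw [h1, haff, h2, haff, hcoordt j]
    simp only [hwdef]
    field_simp
    ring
  have huT : μ⁻¹ • (z - t) ∈ T := by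
    rw [hTmem]
    intro j
    rw [hcoordu j]
    have : 0 ≤ b.coord j z - m j + ε := by
      have := hzc j
      linarith [hεnn]
    positivity
  refine Set.mem_vadd_set.mpr ⟨μ • μ⁻¹ • (z - t), Set.smul_mem_smul_set huT, ?_⟩
  rw [vadd_eq_add, smul_inv_smul₀ (ne_of_gt hμpos)]
  abel
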